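/- arXiv:0812.2009 — 9 statements merged into one kernel-verified Lean document; each statement's English description precedes it below -/
import Mathlib

section
/- Let F be a field in which 3 is invertible, let W be a Weierstrass curve over F with coefficients a1, a2, a3, a4, a6 and nonzero discriminant, and let P = (x₀, y₀) be an affine point on W. Then P has order exactly 3 in the group of points of W if and only if P is a flex point, i.e. if and only if 2y₀ + a1·x₀ + a3 ≠ 0 and, setting λ = (3x₀² + 2a2·x₀ + a4 − a1·y₀)/(2y₀ + a1·x₀ + a3) (the slope of the tangent line at P), the polynomial X³ + a2·X² + a4·X + a6 − (λ(X − x₀) + y₀)² − (a1·X + a3)(λ(X − x₀) + y₀) is equal to (X − x₀)³ in F[X]. -/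
open Polynomial WeierstrassCurve.Affine

open scoped Classical in
/-- A point `P = (x₀, y₀)` on a smooth Weierstrass curve over a field in which `3` is
invertible has order exactly `3` if and only if it is a flex point, i.e. the tangent line
at `P` meets the curve at `P` with intersection multiplicity `3`. -/
theorem order_three_iff_flex {F : Type*} [Field F] (h3 : (3 : F) ≠ 0)
    (W : WeierstrassCurve F) (hΔ : W.Δ ≠ 0) (x₀ y₀ : F)
    (hP : W.toAffine.Nonsingular x₀ y₀) :
    addOrderOf (WeierstrassCurve.Affine.Point.some x₀ y₀ hP) = 3 ↔
      (2 * y₀ + W.a₁ * x₀ + W.a₃ ≠ 0 ∧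
        X ^ 3 + C W.a₂ * X ^ 2 + C W.a₄ * X + C W.a₆
          - (C ((3 * x₀ ^ 2 + 2 * W.a₂ * x₀ + W.a₄ - W.a₁ * y₀)
                / (2 * y₀ + W.a₁ * x₀ + W.a₃)) * (X - C x₀) + C y₀) ^ 2
          - (C W.a₁ * X + C W.a₃)
            * (C ((3 * x₀ ^ 2 + 2 * W.a₂ * x₀ + W.a₄ - W.a₁ * y₀)
                / (2 * y₀ + W.a₁ * x₀ + W.a₃)) * (X - C x₀) + C y₀)
        = (X - C x₀) ^ 3) := by
  classical
  set P : W.toAffine.Point := WeierstrassCurve.Affine.Point.some x₀ y₀ hP with hPdef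
  have hne : P ≠ 0 := WeierstrassCurve.Affine.Point.some_ne_zero hP
  -- y₀ = negY ↔ denominator zero
  have hyiff : y₀ = W.toAffine.negY x₀ y₀ ↔ 2 * y₀ + W.a₁ * x₀ + W.a₃ = 0 := by
    rw [WeierstrassCurve.Affine.negY]
    constructor <;> intro h <;> linear_combination h
  -- key : statement polynomial = - addPolynomial
  have key : ∀ L : F,
      X ^ 3 + C W.a₂ * X ^ 2 + C W.a₄ * X + C W.a₆
        - (C L * (X - C x₀) + C y₀) ^ 2
        - (C W.a₁ * X + C W.a₃) * (C L * (X - C x₀) + C y₀)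
      = -W.toAffine.addPolynomial x₀ y₀ L := by
    intro L
    rw [WeierstrassCurve.Affine.addPolynomial, WeierstrassCurve.Affine.linePolynomial,
      WeierstrassCurve.Affine.polynomial]
    simp only [eval_add, eval_sub, eval_mul, eval_pow, eval_C, eval_X]
    ring
  constructor
  · intro h
    have h3P : (3 : ℕ) • P = 0 := by
      rw [← h]; exact addOrderOf_nsmul_eq_zero P
    have h3P' : (P + P) + P = 0 := by
      rw [show ((3:ℕ) • P) = (P + P) + P by rw [show (3:ℕ) = 2 + 1 from rfl, add_nsmul,
        two_nsmul, one_nsmul]] at h3P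
      exact h3P
    by_cases hy : y₀ = W.toAffine.negY x₀ y₀
    · exact absurd (by rwa [hPdef, WeierstrassCurve.Affine.Point.add_self_of_Y_eq hy,
        zero_add, ← hPdef] at h3P') hne
    have h2 : P + P = WeierstrassCurve.Affine.Point.some _ _
        (nonsingular_add hP hP fun hxy => hy hxy.2) :=
      WeierstrassCurve.Affine.Point.add_self_of_Y_ne hy
    refine ⟨fun hc => hy (hyiff.mpr hc), ?_⟩
    -- extract coordinates
    rw [h2, hPdef] at h3P'
    have h3P'' := eq_neg_of_add_eq_zero_left h3P'
    rw [WeierstrassCurve.Affine.Point.neg_some] at h3P''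
    injection h3P'' with hx hy'
    -- slope eq
    have hslope : W.toAffine.slope x₀ x₀ y₀ y₀ =
        (3 * x₀ ^ 2 + 2 * W.a₂ * x₀ + W.a₄ - W.a₁ * y₀) / (2 * y₀ + W.a₁ * x₀ + W.a₃) := by
      rw [WeierstrassCurve.Affine.slope_of_Y_ne rfl hy, WeierstrassCurve.Affine.negY]
      congr 1; ring
    rw [← hslope, key]
    rw [addPolynomial_slope hP.1 hP.1 fun hxy => hy hxy.2, hx]
    ring
  · rintro ⟨hden, hpoly⟩
    have hy : y₀ ≠ W.toAffine.negY x₀ y₀ := fun hc => hden (hyiff.mp hc)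
    have hslope : W.toAffine.slope x₀ x₀ y₀ y₀ =
        (3 * x₀ ^ 2 + 2 * W.a₂ * x₀ + W.a₄ - W.a₁ * y₀) / (2 * y₀ + W.a₁ * x₀ + W.a₃) := by
      rw [WeierstrassCurve.Affine.slope_of_Y_ne rfl hy, WeierstrassCurve.Affine.negY]
      congr 1; ring
    rw [← hslope, key, addPolynomial_slope hP.1 hP.1 fun hxy => hy hxy.2] at hpoly
    -- hpoly : (X - C x₀) * (X - C x₀) * (X - C addX) = (X - C x₀)^3  (after neg_neg)
    have hx : W.toAffine.addX x₀ x₀ (W.toAffine.slope x₀ x₀ y₀ y₀) = x₀ := by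
      have h' : (X - C x₀) * (X - C x₀) *
          (X - C (W.toAffine.addX x₀ x₀ (W.toAffine.slope x₀ x₀ y₀ y₀)))
          = (X - C x₀) * (X - C x₀) * (X - C x₀) := by
        rw [← neg_neg ((X - C x₀) * (X - C x₀) * _), hpoly]; ring
      have hXne : (X - C x₀) * (X - C x₀) ≠ (0 : F[X]) :=
        mul_ne_zero (X_sub_C_ne_zero x₀) (X_sub_C_ne_zero x₀)
      have h'' := mul_left_cancel₀ hXne h'
      exact C_inj.mp (sub_right_inj.mp h'')
    have haddY : W.toAffine.addY x₀ x₀ y₀ (W.toAffine.slope x₀ x₀ y₀ y₀)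
        = W.toAffine.negY x₀ y₀ := by
      rw [WeierstrassCurve.Affine.addY, WeierstrassCurve.Affine.negAddY, hx]
      simp [WeierstrassCurve.Affine.negY]
    have h3P : (P + P) + P = 0 := by
      rw [hPdef, WeierstrassCurve.Affine.Point.add_self_of_Y_ne hy]
      exact WeierstrassCurve.Affine.Point.add_of_Y_eq hx (by rw [haddY])
    have : Fact (Nat.Prime 3) := ⟨by norm_num⟩
    refine addOrderOf_eq_prime ?_ hne
    rw [show ((3:ℕ) • P) = (P + P) + P by rw [show (3:ℕ) = 2 + 1 from rfl, add_nsmul,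
      two_nsmul, one_nsmul]]
    exact h3P
end

section
/- Let F be a field in which 3 is invertible, let W be a Weierstrass curve over F with coefficients a1, a2, a3, a4, a6 and nonzero discriminant, and let P = (x₀, y₀) be an affine point of exact order 3 in the group of points of W. Then there exists a unique Weierstrass variable change ψ = (u, r, s, t) with u = 1 such that the transformed curve ψ•W has coefficients of the form (A1, 0, A3, 0, 0) (i.e. its equation is y² + A1·xy + A3·y = x³) and such that ψ maps P to the point with coordinates (0, 0). Moreover for the resulting curve one has A3 ≠ 0 and A1³ − 27·A3 ≠ 0. -/
open WeierstrassCurve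

open Classical in
/-- If `P = (x₀, y₀)` is a point of exact order `3` on a smooth Weierstrass curve over a
field in which `3` is invertible, then there is a unique variable change `ψ = (u, r, s, t)`
with `u = 1` bringing the curve into the form `y² + A1·xy + A3·y = x³` and sending `P` to
`(0, 0)`; moreover the resulting curve satisfies `A3 ≠ 0` and `A1³ - 27·A3 ≠ 0`. -/
theorem exists_unique_variableChange_of_order_three {F : Type*} [Field F] (h3 : (3 : F) ≠ 0)
    (W : WeierstrassCurve F) (hΔ : W.Δ ≠ 0) (x₀ y₀ : F)
    (hP : W.toAffine.Nonsingular x₀ y₀)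
    (hord : addOrderOf (WeierstrassCurve.Affine.Point.some _ _ hP) = 3) :
    (∃! ψ : VariableChange F, ψ.u = 1 ∧
      (ψ • W).a₂ = 0 ∧ (ψ • W).a₄ = 0 ∧ (ψ • W).a₆ = 0 ∧
      (↑ψ.u⁻¹ : F) ^ 2 * (x₀ - ψ.r) = 0 ∧
      (↑ψ.u⁻¹ : F) ^ 3 * (y₀ - ψ.t - ψ.s * (x₀ - ψ.r)) = 0) ∧
    ∀ ψ : VariableChange F, (ψ.u = 1 ∧
      (ψ • W).a₂ = 0 ∧ (ψ • W).a₄ = 0 ∧ (ψ • W).a₆ = 0 ∧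
      (↑ψ.u⁻¹ : F) ^ 2 * (x₀ - ψ.r) = 0 ∧
      (↑ψ.u⁻¹ : F) ^ 3 * (y₀ - ψ.t - ψ.s * (x₀ - ψ.r)) = 0) →
      (ψ • W).a₃ ≠ 0 ∧ (ψ • W).a₁ ^ 3 - 27 * (ψ • W).a₃ ≠ 0 := by
  have smul_def : ∀ ψ : VariableChange F, ψ • W = ψ • W := fun _ => rfl
  set P : W.toAffine.Point := Affine.Point.some _ _ hP with hPdef
  -- basic torsion facts
  have h3P : P + P + P = 0 := by
    have := addOrderOf_nsmul_eq_zero P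
    rw [hord] at this
    rwa [show (3 : ℕ) • P = P + P + P by rw [succ_nsmul, two_nsmul]] at this
  have h2P : P + P ≠ 0 := by
    intro h
    have := addOrderOf_dvd_of_nsmul_eq_zero (show (2:ℕ) • P = 0 by rwa [two_nsmul])
    rw [hord] at this
    omega
  have hy : y₀ ≠ W.toAffine.negY x₀ y₀ := by
    intro h
    exact h2P (Affine.Point.add_self_of_Y_eq h)
  have hD : y₀ - W.toAffine.negY x₀ y₀ ≠ 0 := sub_ne_zero.mpr hy
  -- slope of the tangent at P
  set L : F := W.toAffine.slope x₀ x₀ y₀ y₀ with hLdef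
  have hL : L * (y₀ - W.toAffine.negY x₀ y₀)
      = 3 * x₀ ^ 2 + 2 * W.a₂ * x₀ + W.a₄ - W.a₁ * y₀ := by
    rw [hLdef, Affine.slope_of_Y_ne rfl hy, div_mul_cancel₀ _ hD]
  have hL' : L * (2 * y₀ + W.a₁ * x₀ + W.a₃)
      = 3 * x₀ ^ 2 + 2 * W.a₂ * x₀ + W.a₄ - W.a₁ * y₀ := by
    rw [← hL, Affine.negY]; ring
  -- 2P = -P gives the x-coordinate relation
  have hdbl : P + P = -P := by
    apply eq_neg_of_add_eq_zero_left h3P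
  have hx : W.toAffine.addX x₀ x₀ L = x₀ := by
    have h1 : P + P = Affine.Point.some _ _ (Affine.nonsingular_add hP hP fun hxy => hy hxy.2) :=
      Affine.Point.add_self_of_Y_ne hy
    have h2 : -P = Affine.Point.some _ _ ((Affine.nonsingular_neg ..).mpr hP) := Affine.Point.neg_some hP
    rw [h1, h2, Affine.Point.some.injEq] at hdbl
    exact hdbl.1
  have hxx : L ^ 2 + W.a₁ * L - W.a₂ - x₀ - x₀ = x₀ := by
    rw [Affine.addX] at hx; exact hx
  have heq : y₀ ^ 2 + W.a₁ * x₀ * y₀ + W.a₃ * y₀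
      = x₀ ^ 3 + W.a₂ * x₀ ^ 2 + W.a₄ * x₀ + W.a₆ := by
    have := (Affine.equation_iff _ _).mp hP.1
    linear_combination this
  have hDne : 2 * y₀ + W.a₁ * x₀ + W.a₃ ≠ 0 := by
    intro h; apply hD; rw [Affine.negY]; linear_combination h
  set ψ₀ : VariableChange F := ⟨1, x₀, L, y₀⟩ with hψ₀
  have hcond : ∀ ψ : VariableChange F, (ψ.u = 1 ∧
      (ψ • W).a₂ = 0 ∧ (ψ • W).a₄ = 0 ∧ (ψ • W).a₆ = 0 ∧
      (↑ψ.u⁻¹ : F) ^ 2 * (x₀ - ψ.r) = 0 ∧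
      (↑ψ.u⁻¹ : F) ^ 3 * (y₀ - ψ.t - ψ.s * (x₀ - ψ.r)) = 0) → ψ = ψ₀ := by
    rintro ψ ⟨hu, h2', h4', h6', hr', ht'⟩
    have hu1 : (↑ψ.u⁻¹ : F) = 1 := by rw [hu]; simp
    rw [hu1, one_pow, one_mul] at hr' ht'
    have hr : ψ.r = x₀ := (sub_eq_zero.mp hr').symm
    rw [hr, sub_self, mul_zero, sub_zero] at ht'
    have ht : ψ.t = y₀ := (sub_eq_zero.mp ht').symm
    rw [smul_def, variableChange_a₄, hu1, hr, ht] at h4'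
    have hs : ψ.s = L := by
      have : (ψ.s - L) * (2 * y₀ + W.a₁ * x₀ + W.a₃) = 0 := by
        linear_combination -h4' - hL'
      rcases mul_eq_zero.mp this with h | h
      · exact sub_eq_zero.mp h
      · exact absurd h hDne
    cases ψ
    simp_all [hψ₀]
  constructor
  · refine ⟨ψ₀, ⟨rfl, ?_, ?_, ?_, ?_, ?_⟩, hcond⟩
    · rw [smul_def, variableChange_a₂, hψ₀]
      simp only [inv_one, Units.val_one, one_pow, one_mul]
      linear_combination -hxx
    · rw [smul_def, variableChange_a₄, hψ₀]
      simp only [inv_one, Units.val_one, one_pow, one_mul]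
      linear_combination -hL'
    · rw [smul_def, variableChange_a₆, hψ₀]
      simp only [inv_one, Units.val_one, one_pow, one_mul]
      linear_combination -heq
    · simp [hψ₀]
    · simp [hψ₀]
  · rintro ψ ⟨hu, h2', h4', h6', hr', ht'⟩
    have hΔ' : (ψ • W).Δ ≠ 0 := by
      rw [smul_def, variableChange_Δ, hu]
      simpa using hΔ
    have hfac : (ψ • W).Δ = (ψ • W).a₃ ^ 3 * ((ψ • W).a₁ ^ 3 - 27 * (ψ • W).a₃) := by
      rw [Δ, b₂, b₄, b₆, b₈, h2', h4', h6']
      ring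
    rw [hfac] at hΔ'
    exact ⟨pow_ne_zero_iff (by norm_num) |>.mp (left_ne_zero_of_mul hΔ'),
      right_ne_zero_of_mul hΔ'⟩
end

section
/- Let F be a field, a1, a3 ∈ F with a3³·(a1³ − 27·a3) ≠ 0, and let W be the Weierstrass curve y² + a1·xy + a3·y = x³ over F (which is then smooth). In the group of points of W: the points (0, 0) and (0, −a3) lie on W, the only affine points of W with x-coordinate 0 are these two, the negative of (0,0) is (0,−a3), the sum (0,0) + (0,0) equals (0, −a3), and the point (0,0) has exact order 3. -/
open WeierstrassCurve.Affine

/-- The Weierstrass curve `y² + a₁·xy + a₃·y = x³`. -/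
def gammaOneCurve {F : Type*} [Field F] (a1 a3 : F) : WeierstrassCurve.Affine F :=
  ⟨a1, 0, a3, 0, 0⟩

lemma some_congr' {F : Type*} [Field F] {W : WeierstrassCurve.Affine F} {x y x' y' : F}
    (h : W.Nonsingular x y) (h' : W.Nonsingular x' y') (hx : x = x') (hy : y = y') :
    Point.some x y h = Point.some x' y' h' := by
  subst hx; subst hy; rfl

open Classical in
/-- On the smooth Weierstrass curve `W : y² + a₁·xy + a₃·y = x³` (smooth since its
discriminant `a₃³·(a₁³ - 27·a₃)` is nonzero): the points `(0, 0)` and `(0, -a₃)` lie on `W`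
and are its only affine points with `x`-coordinate `0`; moreover `-(0,0) = (0,-a₃)`,
`(0,0) + (0,0) = (0,-a₃)`, and `(0,0)` has exact order `3`. -/
theorem gammaOneCurve_origin_order_three {F : Type*} [Field F] (a1 a3 : F)
    (hΔ : a3 ^ 3 * (a1 ^ 3 - 27 * a3) ≠ 0) :
    (gammaOneCurve a1 a3).Nonsingular 0 0 ∧
    (gammaOneCurve a1 a3).Nonsingular 0 (-a3) ∧
    (∀ y : F, (gammaOneCurve a1 a3).Equation 0 y → y = 0 ∨ y = -a3) ∧
    ∀ (h₁ : (gammaOneCurve a1 a3).Nonsingular 0 0)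
      (h₂ : (gammaOneCurve a1 a3).Nonsingular 0 (-a3)),
      -(Point.some 0 0 h₁) = Point.some 0 (-a3) h₂ ∧
      Point.some 0 0 h₁ + Point.some 0 0 h₁ = Point.some 0 (-a3) h₂ ∧
      addOrderOf (Point.some 0 0 h₁) = 3 := by
  have ha3 : a3 ≠ 0 := fun h => hΔ (by rw [h]; ring)
  have hns1 : (gammaOneCurve a1 a3).Nonsingular 0 0 := by
    rw [nonsingular_iff, equation_iff]
    simp [gammaOneCurve, ha3]
  have hns2 : (gammaOneCurve a1 a3).Nonsingular 0 (-a3) := by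
    rw [nonsingular_iff, equation_iff]
    simp only [gammaOneCurve]
    constructor
    · ring
    · right
      intro h
      exact ha3 (by linear_combination -h)
  have hnegY : (gammaOneCurve a1 a3).negY 0 0 = -a3 := by
    simp [negY, gammaOneCurve]
  refine ⟨hns1, hns2, ?_, ?_⟩
  · intro y hy
    rw [equation_iff] at hy
    simp only [gammaOneCurve] at hy
    have : y * (y + a3) = 0 := by linear_combination hy
    rcases mul_eq_zero.mp this with h | h
    · exact Or.inl h
    · exact Or.inr (by linear_combination h)
  · intro h₁ h₂
    have hy0 : (0 : F) ≠ (gammaOneCurve a1 a3).negY 0 0 := by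
      rw [hnegY]; exact fun h => ha3 (by linear_combination h)
    have hslope : (gammaOneCurve a1 a3).slope 0 0 0 0 = 0 := by
      rw [slope_of_Y_ne rfl hy0]
      simp [gammaOneCurve]
    have hneg : -(Point.some 0 0 h₁) = Point.some 0 (-a3) h₂ := by
      rw [Point.neg_some]
      exact some_congr' _ _ rfl hnegY
    have hadd : Point.some 0 0 h₁ + Point.some 0 0 h₁ = Point.some 0 (-a3) h₂ := by
      rw [Point.add_self_of_Y_ne hy0]
      refine some_congr' _ _ ?_ ?_
      · rw [hslope]; simp [addX, gammaOneCurve]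
      · rw [hslope]
        simp [addY, negAddY, addX, negY, gammaOneCurve]
    refine ⟨hneg, hadd, ?_⟩
    have h3 : (3 : ℕ) • Point.some 0 0 h₁ = 0 := by
      have : Point.some 0 0 h₁ + Point.some 0 0 h₁ + Point.some 0 0 h₁ = 0 := by
        rw [hadd, ← hneg]; exact neg_add_cancel _
      rw [show (3 : ℕ) • Point.some 0 0 h₁ = Point.some 0 0 h₁ + Point.some 0 0 h₁ + Point.some 0 0 h₁ by
        rw [succ_nsmul, two_nsmul]]
      exact this
    haveI : Fact (Nat.Prime 3) := ⟨by norm_num⟩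
    exact addOrderOf_eq_prime h3 (Point.some_ne_zero h₁)
end

section
/- Let F be a field, a1, a3 ∈ F with a3³·(a1³ − 27·a3) ≠ 0, and let W be the (smooth) Weierstrass curve y² + a1·xy + a3·y = x³ over F. Let P = (x, y) be an affine point of W with x ≠ 0. Then in the group of points of W, translation by the order-3 point P₀ = (0,0) is given by P + P₀ = (−a3·y/x², −a3²·y/x³). -/
open WeierstrassCurve.Affine

open Classical in
/-- On the smooth Weierstrass curve `W : y² + a₁·xy + a₃·y = x³`, translation by the
order-3 point `P₀ = (0, 0)` sends an affine point `P = (x, y)` with `x ≠ 0` to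
`(-a₃·y/x², -a₃²·y/x³)`. -/
theorem gammaOneCurve_translation_by_origin {F : Type*} [Field F] (a1 a3 x y : F)
    (hΔ : a3 ^ 3 * (a1 ^ 3 - 27 * a3) ≠ 0) (hx : x ≠ 0)
    (hP : (gammaOneCurve a1 a3).Nonsingular x y)
    (h₀ : (gammaOneCurve a1 a3).Nonsingular 0 0) :
    ∃ hQ : (gammaOneCurve a1 a3).Nonsingular (-a3 * y / x ^ 2) (-a3 ^ 2 * y / x ^ 3),
      Point.some _ _ hP + Point.some _ _ h₀ = Point.some _ _ hQ := by
  have heq : y ^ 2 + a1 * x * y + a3 * y = x ^ 3 := by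
    have := hP.1
    rw [equation_iff] at this
    simpa [gammaOneCurve] using this
  have hL : (gammaOneCurve a1 a3).slope x 0 y 0 = y / x := by
    rw [slope_of_X_ne hx]
    simp
  have hx3 : (gammaOneCurve a1 a3).addX x 0 ((gammaOneCurve a1 a3).slope x 0 y 0)
      = -a3 * y / x ^ 2 := by
    rw [hL, addX]
    show (y / x) ^ 2 + a1 * (y / x) - 0 - x - 0 = -a3 * y / x ^ 2
    field_simp
    linear_combination heq
  have hy3 : (gammaOneCurve a1 a3).addY x 0 y ((gammaOneCurve a1 a3).slope x 0 y 0)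
      = -a3 ^ 2 * y / x ^ 3 := by
    rw [addY, negAddY, hx3, hL, negY]
    show -(y / x * (-a3 * y / x ^ 2 - x) + y) - a1 * (-a3 * y / x ^ 2) - a3
        = -a3 ^ 2 * y / x ^ 3
    field_simp
    linear_combination a3 * heq
  refine ⟨?_, ?_⟩
  · rw [← hx3, ← hy3]
    exact nonsingular_add hP h₀ fun h => absurd h.1 hx
  · rw [Point.add_of_X_ne hx]
    congr 1 <;> simp [hx3, hy3]
end

section
/- Let r, k ≥ 0 be integers and set N = 2^r·(2k+1). In the polynomial ring 𝔽₂[a1, a3], consider P = (a3⁴ + a1³·a3³ + a1⁶·a3² + a1⁹·a3)^N + (a3⁴ + a1³·a3³)^N. Then the coefficient of the monomial a1^(3·2^(r+1)) · a3^(2^(r+1)·(4k+1)) in P is 1, and every monomial a1^i·a3^j occurring in P with nonzero coefficient satisfies i ≥ 3·2^(r+1). (That is, δ(Δ^(2^r(2k+1))) ≡ a1^(3·2^(r+1))·a3^(2^(r+1)(4k+1)) + higher terms in a1, modulo 2.) -/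
open MvPolynomial

/-- The mod-2 reduction of `q*(Δ)` in `𝔽₂[a₁, a₃]`. -/
noncomputable def qDelta : MvPolynomial (Fin 2) (ZMod 2) :=
  X 1 ^ 4 + X 0 ^ 3 * X 1 ^ 3 + X 0 ^ 6 * X 1 ^ 2 + X 0 ^ 9 * X 1

/-- The mod-2 reduction of `f*(Δ)` in `𝔽₂[a₁, a₃]`. -/
noncomputable def fDelta : MvPolynomial (Fin 2) (ZMod 2) :=
  X 1 ^ 4 + X 0 ^ 3 * X 1 ^ 3

noncomputable def piHom : MvPolynomial (Fin 2) (ZMod 2) →+* Polynomial (ZMod 2) :=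
  eval₂Hom Polynomial.C ![0, Polynomial.X]

lemma eq_single_iff (d : Fin 2 →₀ ℕ) (m : ℕ) (h : d 0 = 0) :
    d = Finsupp.single 1 m ↔ d 1 = m := by
  constructor
  · intro hd; rw [hd]; simp
  · intro hm; ext i; fin_cases i <;> simp [h, hm]

lemma coeff_piHom (m : ℕ) (p : MvPolynomial (Fin 2) (ZMod 2)) :
    (piHom p).coeff m = p.coeff (Finsupp.single 1 m) := by
  induction p using MvPolynomial.induction_on' with
  | monomial d a =>
    have hpi : piHom (monomial d a)
        = Polynomial.C a * ((0 : Polynomial (ZMod 2)) ^ (d 0) * Polynomial.X ^ d 1) := by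
      rw [piHom, eval₂Hom_monomial, Finsupp.prod_fintype _ _ (fun i => pow_zero _),
        Fin.prod_univ_two]
      simp
    rw [hpi, MvPolynomial.coeff_monomial]
    rcases Nat.eq_zero_or_pos (d 0) with h | h
    · rw [h, pow_zero, one_mul, Polynomial.coeff_C_mul, Polynomial.coeff_X_pow]
      simp only [eq_single_iff d m h]
      rcases eq_or_ne (d 1) m with hdm | hdm
      · simp [hdm]
      · simp [hdm, Ne.symm hdm]
    · rw [zero_pow (by omega), zero_mul, mul_zero, Polynomial.coeff_zero]
      have : d ≠ Finsupp.single 1 m := by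
        intro hd; rw [hd] at h; simp at h
      simp [this]
  | add p q hp hq => simp [map_add, MvPolynomial.coeff_add, hp, hq]

/-- Modulo 2, `δ(Δ^(2^r·(2k+1))) = a₁^(3·2^(r+1))·a₃^(2^(r+1)·(4k+1)) +` higher terms
in `a₁`. -/
theorem delta_pow_leading_term (r k : ℕ) :
    (qDelta ^ (2 ^ r * (2 * k + 1)) + fDelta ^ (2 ^ r * (2 * k + 1))).coeff
        (Finsupp.single (0 : Fin 2) (3 * 2 ^ (r + 1))
          + Finsupp.single (1 : Fin 2) (2 ^ (r + 1) * (4 * k + 1))) = 1 ∧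
    ∀ d : Fin 2 →₀ ℕ,
      (qDelta ^ (2 ^ r * (2 * k + 1)) + fDelta ^ (2 ^ r * (2 * k + 1))).coeff d ≠ 0 →
        3 * 2 ^ (r + 1) ≤ d 0 := by
  set n := 2 * k + 1 with hn
  set S : MvPolynomial (Fin 2) (ZMod 2) :=
    ∑ i ∈ Finset.range n, qDelta ^ i * fDelta ^ (n - 1 - i) with hS
  have hdiff : qDelta - fDelta = X 0 ^ 6 * (X 1 ^ 2 + X 0 ^ 3 * X 1) := by
    rw [qDelta, fDelta]; ring
  have h1 : qDelta ^ n + fDelta ^ n = X 0 ^ 6 * ((X 1 ^ 2 + X 0 ^ 3 * X 1) * S) := by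
    rw [← CharTwo.sub_eq_add, ← geom_sum₂_mul qDelta fDelta n, hdiff]; ring
  have h6 : 6 * 2 ^ r = 3 * 2 ^ (r + 1) := by rw [pow_succ]; ring
  have key : qDelta ^ (2 ^ r * n) + fDelta ^ (2 ^ r * n)
      = X 0 ^ (3 * 2 ^ (r + 1)) * ((X 1 ^ 2 + X 0 ^ 3 * X 1) * S) ^ (2 ^ r) := by
    calc qDelta ^ (2 ^ r * n) + fDelta ^ (2 ^ r * n)
        = (qDelta ^ n) ^ (2 ^ r) + (fDelta ^ n) ^ (2 ^ r) := by
          rw [← pow_mul, ← pow_mul, mul_comm]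
      _ = (qDelta ^ n + fDelta ^ n) ^ (2 ^ r) := (add_pow_char_pow ..).symm
      _ = X 0 ^ (3 * 2 ^ (r + 1)) * ((X 1 ^ 2 + X 0 ^ 3 * X 1) * S) ^ (2 ^ r) := by
          rw [h1, mul_pow, ← pow_mul, h6]
  constructor
  · rw [key, X_pow_eq_monomial, coeff_monomial_mul, one_mul, ← coeff_piHom]
    have hp0 : piHom (X 0) = 0 := by simp [piHom]
    have hp1 : piHom (X 1) = Polynomial.X := by simp [piHom]
    have hq : piHom qDelta = Polynomial.X ^ 4 := by
      simp [piHom, qDelta]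
    have hf : piHom fDelta = Polynomial.X ^ 4 := by
      simp [piHom, fDelta]
    have hSn : piHom S = Polynomial.X ^ (8 * k) := by
      rw [hS, map_sum]
      have : ∀ i ∈ Finset.range n, piHom (qDelta ^ i * fDelta ^ (n - 1 - i))
          = Polynomial.X ^ (8 * k) := by
        intro i hi
        rw [map_mul, map_pow, map_pow, hq, hf, ← pow_mul, ← pow_mul, ← pow_add]
        congr 1
        have := Finset.mem_range.mp hi
        omega
      rw [Finset.sum_congr rfl this, Finset.sum_const, Finset.card_range]
      rw [nsmul_eq_mul]
      have h2 : ((n : ℕ) : Polynomial (ZMod 2)) = 1 := by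
        rw [hn]; push_cast; rw [(CharTwo.two_eq_zero : (2 : Polynomial (ZMod 2)) = 0)]; ring
      rw [h2, one_mul]
    rw [map_pow, map_mul, map_add, map_mul, map_pow, map_pow, hp0, hp1, hSn]
    have : ((Polynomial.X : Polynomial (ZMod 2)) ^ 2 + 0 ^ 3 * Polynomial.X)
        * Polynomial.X ^ (8 * k) = Polynomial.X ^ (8 * k + 2) := by ring
    rw [this, ← pow_mul, Polynomial.coeff_X_pow, if_pos]
    rw [pow_succ]; ring
  · intro d hd
    rw [key, X_pow_eq_monomial, coeff_monomial_mul'] at hd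
    by_contra hle
    apply hd
    rw [if_neg]
    intro hle'
    exact hle (Finsupp.single_le_iff.mp hle')
end

section
/- Let r, k ≥ 0 be integers and set N = 2^r·(2k+1). In the polynomial ring 𝔽₂[t], the polynomial (1 + t³ + t⁶ + t⁹)^N − (1 + t³)^N is nonzero, and its trailing degree (the smallest exponent appearing with nonzero coefficient) equals 3·2^(r+1). -/
open Polynomial

/-- In `𝔽₂[t]`, the polynomial `(1 + t³ + t⁶ + t⁹)^(2^r·(2k+1)) - (1 + t³)^(2^r·(2k+1))`
is nonzero with trailing degree `3·2^(r+1)`. -/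
theorem trailing_degree_delta_pow (r k : ℕ) :
    ((1 + X ^ 3 + X ^ 6 + X ^ 9 : Polynomial (ZMod 2)) ^ (2 ^ r * (2 * k + 1))
        - (1 + X ^ 3) ^ (2 ^ r * (2 * k + 1))) ≠ 0 ∧
    ((1 + X ^ 3 + X ^ 6 + X ^ 9 : Polynomial (ZMod 2)) ^ (2 ^ r * (2 * k + 1))
        - (1 + X ^ 3) ^ (2 ^ r * (2 * k + 1))).natTrailingDegree = 3 * 2 ^ (r + 1) := by
  set N := 2 ^ r * (2 * k + 1) with hN
  set m := 6 * 2 ^ r with hm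
  have hfact : (1 + X ^ 3 + X ^ 6 + X ^ 9 : Polynomial (ZMod 2))
      = (1 + X ^ 3) * (1 + X ^ 6) := by ring
  -- Frobenius: (1 + X^6)^(2^r) = 1 + X^m
  have hfrob : ((1 + X ^ 6 : Polynomial (ZMod 2)) ^ (2 ^ r)) = 1 + X ^ m := by
    have := add_pow_char_pow (R := Polynomial (ZMod 2)) (p := 2)
      (x := (1 : Polynomial (ZMod 2))) (y := X ^ 6) (n := r)
    rw [this, one_pow, ← pow_mul, hm]
  set S : Polynomial (ZMod 2) :=
    ∑ i ∈ Finset.range (2 * k + 1), (1 + X ^ m) ^ i with hS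
  have hgeom : (1 + X ^ m : Polynomial (ZMod 2)) ^ (2 * k + 1) - 1 = S * X ^ m := by
    have := geom_sum_mul (1 + X ^ m : Polynomial (ZMod 2)) (2 * k + 1)
    rw [← this, add_sub_cancel_left]
  have key : (1 + X ^ 3 + X ^ 6 + X ^ 9 : Polynomial (ZMod 2)) ^ N
      - (1 + X ^ 3) ^ N = (1 + X ^ 3) ^ N * (S * X ^ m) := by
    rw [hfact, mul_pow, ← hgeom, hN, mul_comm (2 ^ r) (2 * k + 1), pow_mul,
      mul_comm (2 * k + 1) (2 ^ r), pow_mul, hfrob]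
    ring
  -- nonzeroness facts
  have hS0 : S.coeff 0 = 1 := by
    simp only [hS, finset_sum_coeff]
    have : ∀ i ∈ Finset.range (2 * k + 1),
        ((1 + X ^ m : Polynomial (ZMod 2)) ^ i).coeff 0 = 1 := by
      intro i _
      rw [coeff_zero_eq_eval_zero]
      simp [hm]
    rw [Finset.sum_congr rfl this, Finset.sum_const, Finset.card_range, nsmul_eq_mul,
      mul_one]
    push_cast
    simp [CharP.cast_eq_zero]
    exact Or.inl (by decide)
  have hSne : S ≠ 0 := fun h => by simp [h] at hS0
  have hbne : (1 + X ^ 3 : Polynomial (ZMod 2)) ≠ 0 := fun h => by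
    have : (1 + X ^ 3 : Polynomial (ZMod 2)).coeff 0 = 1 := by simp
    rw [h] at this; simp at this
  have hbpow : ((1 + X ^ 3 : Polynomial (ZMod 2)) ^ N) ≠ 0 := pow_ne_zero _ hbne
  have hXm : (X ^ m : Polynomial (ZMod 2)) ≠ 0 := pow_ne_zero _ X_ne_zero
  have hne : (1 + X ^ 3 : Polynomial (ZMod 2)) ^ N * (S * X ^ m) ≠ 0 :=
    mul_ne_zero hbpow (mul_ne_zero hSne hXm)
  constructor
  · rw [key]; exact hne
  · rw [key, natTrailingDegree_mul hbpow (mul_ne_zero hSne hXm),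
      natTrailingDegree_mul hSne hXm, natTrailingDegree_X_pow]
    have h1 : ((1 + X ^ 3 : Polynomial (ZMod 2)) ^ N).natTrailingDegree = 0 := by
      rw [natTrailingDegree_eq_zero]
      right
      rw [coeff_zero_eq_eval_zero]
      simp
    have h2 : S.natTrailingDegree = 0 := by
      rw [natTrailingDegree_eq_zero]
      right
      rw [hS0]; exact one_ne_zero
    rw [h1, h2]
    rw [hm]; ring
end

section
/- Let k ≥ 1 be an integer and let ν₂(k) denote the 2-adic valuation of k. In the polynomial ring ℤ[a1, a3], there exists a polynomial g such that (a1⁴ + 216·a1·a3)^k − (a1⁴ − 24·a1·a3)^k = 2^(4+ν₂(k)) · g, and the coefficient of the monomial a1^(4k−3)·a3 in g is odd. (That is, δ(c4^k) = 2^(4+ν₂(k))·[(odd)·a1^(4(k−1))·a1·a3 + other terms], and in particular 2^(4+ν₂(k)) divides δ(c4^k) exactly.) -/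
open MvPolynomial

open Finset

private abbrev RR := MvPolynomial (Fin 2) ℤ
private noncomputable abbrev xx : RR := (X 0)^4 + 216 * X 0 * X 1
private noncomputable abbrev yy : RR := (X 0)^4 - 24 * X 0 * X 1

private noncomputable abbrev φ : RR →+* MvPolynomial (Fin 2) (ZMod 2) :=
  MvPolynomial.map (Int.castRingHom (ZMod 2))

private lemma map_xx : φ xx = (X 0)^4 := by
  simp only [xx, map_add, map_mul, map_pow, MvPolynomial.map_X]
  rw [show (216 : MvPolynomial (Fin 2) ℤ) = C 216 from by norm_num, MvPolynomial.map_C,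
    show (Int.castRingHom (ZMod 2)) 216 = 0 from by decide]
  simp

private lemma map_yy : φ yy = (X 0)^4 := by
  simp only [yy, map_sub, map_mul, map_pow, MvPolynomial.map_X]
  rw [show (24 : MvPolynomial (Fin 2) ℤ) = C 24 from by norm_num, MvPolynomial.map_C,
    show (Int.castRingHom (ZMod 2)) 24 = 0 from by decide]
  simp

private lemma main_lemma (k : ℕ) (hk : 1 ≤ k) :
    ∃ g : RR, xx ^ k - yy ^ k = 2 ^ (4 + padicValNat 2 k) * g ∧
      φ g = X 0 ^ (4 * k - 3) * X 1 := by
  induction k using Nat.strong_induction_on with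
  | _ k ih =>
  rcases Nat.even_or_odd k with he | ho
  · -- even case
    obtain ⟨k', rfl⟩ := he
    have hk' : 1 ≤ k' := by omega
    obtain ⟨g', hg', hmapg'⟩ := ih k' (by omega) hk'
    set h : RR := 2 ^ (3 + padicValNat 2 k') * g' + yy ^ k' with hh
    have hsum : xx ^ k' + yy ^ k' = 2 * h := by
      have : xx ^ k' = 2 ^ (4 + padicValNat 2 k') * g' + yy ^ k' := by linear_combination hg'
      rw [this, hh]; ring
    have hv2 : padicValNat 2 (k' + k') = padicValNat 2 k' + 1 := by
      haveI : Fact (Nat.Prime 2) := ⟨Nat.prime_two⟩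
      rw [show k' + k' = 2 * k' by ring,
        padicValNat.mul (show (2:ℕ) ≠ 0 by norm_num) (show k' ≠ 0 by omega),
        padicValNat.self (by norm_num)]
      omega
    refine ⟨g' * h, ?_, ?_⟩
    · have key : xx ^ (k' + k') - yy ^ (k' + k') = (xx ^ k' - yy ^ k') * (xx ^ k' + yy ^ k') := by
        ring
      rw [key, hg', hsum, hv2]
      ring
    · have h2 : φ ((2:RR) ^ (3 + padicValNat 2 k')) = 0 := by
        rw [map_pow, show (2 : MvPolynomial (Fin 2) ℤ) = C 2 from by norm_num,
          MvPolynomial.map_C, show (Int.castRingHom (ZMod 2)) 2 = 0 from by decide, map_zero,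
          zero_pow (by omega)]
      rw [map_mul, hmapg', hh, map_add, map_mul, h2, zero_mul, zero_add, map_pow, map_yy,
        ← pow_mul, show 4 * (k' + k') - 3 = (4 * k' - 3) + 4 * k' from by omega, pow_add]
      ring
  · -- odd case
    have hodd : ¬ (2 ∣ k) := by rw [Nat.odd_iff] at ho; omega
    have hv : padicValNat 2 k = 0 := padicValNat.eq_zero_of_not_dvd hodd
    refine ⟨15 * (X 0 * X 1) * ∑ i ∈ range k, xx ^ i * yy ^ (k - 1 - i), ?_, ?_⟩
    · rw [← geom_sum₂_mul xx yy k, hv]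
      ring
    · rw [map_mul, map_mul, map_sum]
      have h15 : φ (15 : RR) = 1 := by
        rw [show (15 : MvPolynomial (Fin 2) ℤ) = C 15 from by norm_num, MvPolynomial.map_C,
          show (Int.castRingHom (ZMod 2)) 15 = 1 from by decide, map_one]
      have hterm : ∀ i ∈ range k, φ (xx ^ i * yy ^ (k - 1 - i)) = X 0 ^ (4 * (k-1)) := by
        intro i hi
        rw [map_mul, map_pow, map_pow, map_xx, map_yy, ← pow_mul, ← pow_mul, ← pow_add]
        congr 1
        simp at hi
        omega
      rw [Finset.sum_congr rfl hterm, Finset.sum_const, card_range, h15, one_mul, map_mul,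
        MvPolynomial.map_X, MvPolynomial.map_X, nsmul_eq_mul]
      have hk1 : ((k : MvPolynomial (Fin 2) (ZMod 2))) = 1 := by
        have h1 : (k : ZMod 2) = 1 := by
          obtain ⟨j, rfl⟩ := ho
          push_cast
          rw [show (2 : ZMod 2) = 0 from rfl]
          ring
        rw [← map_natCast (MvPolynomial.C : ZMod 2 →+* MvPolynomial (Fin 2) (ZMod 2)) k, h1,
          map_one]
      rw [hk1, one_mul, show 4 * k - 3 = 1 + 4 * (k - 1) from by omega, pow_add, pow_one]
      ring

/-- `δ(c₄^k) = q*(c₄)^k - f*(c₄)^k = 2^(4+ν₂(k))·g` in `ℤ[a₁, a₃]`, where the coefficient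
of `a₁^(4k-3)·a₃` in `g` is odd; in particular `2^(4+ν₂(k))` divides `δ(c₄^k)` exactly. -/
theorem delta_c4_pow_divisibility (k : ℕ) (hk : 1 ≤ k) :
    ∃ g : MvPolynomial (Fin 2) ℤ,
      ((X 0 : MvPolynomial (Fin 2) ℤ) ^ 4 + 216 * X 0 * X 1) ^ k
          - ((X 0 : MvPolynomial (Fin 2) ℤ) ^ 4 - 24 * X 0 * X 1) ^ k
        = 2 ^ (4 + padicValNat 2 k) * g ∧
      Odd (g.coeff (Finsupp.single (0 : Fin 2) (4 * k - 3)
        + Finsupp.single (1 : Fin 2) 1)) := by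
  obtain ⟨g, hg, hmap⟩ := main_lemma k hk
  refine ⟨g, hg, ?_⟩
  set μ := Finsupp.single (0 : Fin 2) (4 * k - 3) + Finsupp.single (1 : Fin 2) 1 with hμ
  have hc : ((g.coeff μ : ℤ) : ZMod 2) = 1 := by
    have := congrArg (fun p => MvPolynomial.coeff μ p) hmap
    simp only [φ, MvPolynomial.coeff_map] at this
    rw [show (Int.castRingHom (ZMod 2)) (g.coeff μ) = ((g.coeff μ : ℤ) : ZMod 2) from rfl] at this
    rw [this, X_pow_eq_monomial,
      show (X 1 : MvPolynomial (Fin 2) (ZMod 2)) = monomial (Finsupp.single 1 1) 1 from rfl,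
      monomial_mul, coeff_monomial, if_pos rfl, one_mul]
  rw [← Int.not_even_iff_odd]
  intro hev
  rw [Int.even_iff] at hev
  rw [show ((g.coeff μ : ℤ) : ZMod 2) = 0 from
    (ZMod.intCast_zmod_eq_zero_iff_dvd _ 2).mpr (by omega)] at hc
  exact zero_ne_one hc
end

section
/- Let k ≥ 0 be an integer. In the polynomial ring ℤ[a1, a3], there exists a polynomial g such that (a1⁴ + 216·a1·a3)^k·(−a1⁶ + 540·a1³·a3 + 5832·a3²) − (a1⁴ − 24·a1·a3)^k·(−a1⁶ + 36·a1³·a3 − 216·a3²) = 2³ · g, and the coefficient of the monomial a1^(4k+3)·a3 in g is odd. (That is, δ(c4^k·c6) = 2³·[(odd)·a1^(4k+2)·a1·a3 + other terms], so 2³ divides δ(c4^k·c6) exactly.) -/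
open MvPolynomial

/-- `δ(c₄^k·c₆) = q*(c₄)^k·q*(c₆) - f*(c₄)^k·f*(c₆) = 2³·g` in `ℤ[a₁, a₃]`, where the
coefficient of `a₁^(4k+3)·a₃` in `g` is odd; in particular `2³` divides `δ(c₄^k·c₆)`
exactly. -/
theorem delta_c4_pow_c6_divisibility (k : ℕ) :
    ∃ g : MvPolynomial (Fin 2) ℤ,
      ((X 0 : MvPolynomial (Fin 2) ℤ) ^ 4 + 216 * X 0 * X 1) ^ k
            * (-(X 0 : MvPolynomial (Fin 2) ℤ) ^ 6 + 540 * X 0 ^ 3 * X 1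
              + 5832 * X 1 ^ 2)
          - ((X 0 : MvPolynomial (Fin 2) ℤ) ^ 4 - 24 * X 0 * X 1) ^ k
            * (-(X 0 : MvPolynomial (Fin 2) ℤ) ^ 6 + 36 * X 0 ^ 3 * X 1
              - 216 * X 1 ^ 2)
        = 2 ^ 3 * g ∧
      Odd (g.coeff (Finsupp.single (0 : Fin 2) (4 * k + 3)
        + Finsupp.single (1 : Fin 2) 1)) := by
  obtain ⟨t, ht⟩ := sub_dvd_pow_sub_pow
    ((X 0 : MvPolynomial (Fin 2) ℤ) ^ 4 + 216 * X 0 * X 1)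
    ((X 0 : MvPolynomial (Fin 2) ℤ) ^ 4 - 24 * X 0 * X 1) k
  refine ⟨((X 0 : MvPolynomial (Fin 2) ℤ) ^ 4 + 216 * X 0 * X 1) ^ k
      * (63 * X 0 ^ 3 * X 1 + 756 * X 1 ^ 2)
      + 30 * X 0 * X 1 * t
        * (-(X 0 : MvPolynomial (Fin 2) ℤ) ^ 6 + 36 * X 0 ^ 3 * X 1 - 216 * X 1 ^ 2),
    ?_, ?_⟩
  · linear_combination
      (-(X 0 : MvPolynomial (Fin 2) ℤ) ^ 6 + 36 * X 0 ^ 3 * X 1 - 216 * X 1 ^ 2) * ht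
  · rw [Int.not_even_iff_odd.symm, even_iff_two_dvd,
      show (2:ℤ) = ((2:ℕ):ℤ) by norm_num, ← ZMod.intCast_zmod_eq_zero_iff_dvd]
    rw [show ∀ z : ℤ, ((z : ZMod 2) = 0) = ((Int.castRingHom (ZMod 2)) z = 0) from
      fun z => rfl, ← coeff_map (Int.castRingHom (ZMod 2))]
    have c216 : (216 : MvPolynomial (Fin 2) (ZMod 2)) = 0 := by
      rw [← map_ofNat (C : ZMod 2 →+* MvPolynomial (Fin 2) (ZMod 2)) 216,
        show (216 : ZMod 2) = 0 from by decide, map_zero]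
    have c756 : (756 : MvPolynomial (Fin 2) (ZMod 2)) = 0 := by
      rw [← map_ofNat (C : ZMod 2 →+* MvPolynomial (Fin 2) (ZMod 2)) 756,
        show (756 : ZMod 2) = 0 from by decide, map_zero]
    have c30 : (30 : MvPolynomial (Fin 2) (ZMod 2)) = 0 := by
      rw [← map_ofNat (C : ZMod 2 →+* MvPolynomial (Fin 2) (ZMod 2)) 30,
        show (30 : ZMod 2) = 0 from by decide, map_zero]
    have c36 : (36 : MvPolynomial (Fin 2) (ZMod 2)) = 0 := by
      rw [← map_ofNat (C : ZMod 2 →+* MvPolynomial (Fin 2) (ZMod 2)) 36,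
        show (36 : ZMod 2) = 0 from by decide, map_zero]
    have c63 : (63 : MvPolynomial (Fin 2) (ZMod 2)) = 1 := by
      rw [← map_ofNat (C : ZMod 2 →+* MvPolynomial (Fin 2) (ZMod 2)) 63,
        show (63 : ZMod 2) = 1 from by decide, map_one]
    have hmap : (map (Int.castRingHom (ZMod 2)))
        (((X 0 : MvPolynomial (Fin 2) ℤ) ^ 4 + 216 * X 0 * X 1) ^ k
          * (63 * X 0 ^ 3 * X 1 + 756 * X 1 ^ 2)
          + 30 * X 0 * X 1 * t
            * (-(X 0 : MvPolynomial (Fin 2) ℤ) ^ 6 + 36 * X 0 ^ 3 * X 1 - 216 * X 1 ^ 2))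
        = (X 0 : MvPolynomial (Fin 2) (ZMod 2)) ^ (4 * k + 3) * X 1 := by
      simp only [map_add, map_mul, map_pow, map_sub, map_neg, map_X, map_ofNat,
        c216, c756, c30, c36, c63]
      ring
    rw [hmap, show (X 0 : MvPolynomial (Fin 2) (ZMod 2)) ^ (4 * k + 3) * X 1
        = monomial (Finsupp.single (0 : Fin 2) (4 * k + 3)
            + Finsupp.single (1 : Fin 2) 1) 1 by
      rw [X_pow_eq_monomial, ← pow_one (X 1 : MvPolynomial (Fin 2) (ZMod 2)),
        X_pow_eq_monomial, monomial_mul, one_mul],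
      coeff_monomial, if_pos rfl]
    exact one_ne_zero
end

section
/- Let d ≥ 2 and k ≥ 1 be integers, and let ν₂(k) denote the 2-adic valuation of k. In the polynomial ring ℤ[u, v], there exists a polynomial g such that (u + 2^d·v)^k = u^k + 2^(d+ν₂(k)) · g, where the coefficient of the monomial u^(k−1)·v in g is odd (so g = (odd)·u^(k−1)·v + terms of higher degree in v). -/
open MvPolynomial

-- key divisibility
lemma key_dvd (d k : ℕ) (hd : 2 ≤ d) (j : ℕ) (hj : 1 ≤ j) :
    2 ^ (d + padicValNat 2 k) ∣ k.choose j * 2 ^ (d * j) := by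
  set ν := padicValNat 2 k with hν
  rcases eq_or_lt_of_le hj with h1 | h2
  · -- j = 1
    rw [← h1, Nat.choose_one_right, mul_one, pow_add, mul_comm ((2:ℕ) ^ d)]
    exact mul_dvd_mul (pow_padicValNat_dvd (p := 2)) (dvd_refl _)
  · -- j ≥ 2
    rcases Nat.eq_zero_or_pos k with rfl | hk0
    · simp [Nat.choose_eq_zero_of_lt (by omega : (0:ℕ) < j)]
    set t := padicValNat 2 j with htdef
    have htj : t < j := lt_of_le_of_lt (padicValNat_le_nat_log j) (Nat.log_lt_self 2 (by omega))
    have hC : 2 ^ (ν - t) ∣ k.choose j := by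
      rcases le_or_gt ν t with h | h
      · simp [Nat.sub_eq_zero_of_le h]
      -- use k * choose (k-1) (j-1) = choose k j * j
      have hid : k * Nat.choose (k - 1) (j - 1) = k.choose j * j := by
        have h := Nat.add_one_mul_choose_eq (k - 1) (j - 1)
        rwa [show k - 1 + 1 = k by omega, show j - 1 + 1 = j by omega] at h
      set J := ordCompl[2] j with hJ
      have hj' : j = 2 ^ t * J := by
        rw [hJ, htdef, ← Nat.factorization_def j Nat.prime_two]
        exact (Nat.ordProj_mul_ordCompl_eq_self j 2).symm
      have hdvd1 : 2 ^ ν ∣ k.choose j * j :=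
        hid ▸ Dvd.dvd.mul_right (pow_padicValNat_dvd (p := 2)) _
      have hodd : ¬ (2 ∣ J) := Nat.not_dvd_ordCompl Nat.prime_two (by omega)
      have hcop : Nat.Coprime (2 ^ ν) J :=
        Nat.Coprime.pow_left _ ((Nat.Prime.coprime_iff_not_dvd Nat.prime_two).mpr hodd)
      have hdvd2 : 2 ^ ν ∣ k.choose j * 2 ^ t := by
        have h' : 2 ^ ν ∣ (k.choose j * 2 ^ t) * J := by
          rw [mul_assoc, ← hj']; exact hdvd1
        exact (Nat.Coprime.dvd_of_dvd_mul_right hcop h')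
      have : 2 ^ (ν - t) * 2 ^ t ∣ k.choose j * 2 ^ t := by
        rwa [← pow_add, Nat.sub_add_cancel h.le]
      exact (Nat.mul_dvd_mul_iff_right (Nat.pow_pos (by norm_num) : 0 < 2 ^ t)).mp this
    have htd : d + t ≤ d * j := by
      have h1 : t ≤ j - 1 := by omega
      have h2 : j - 1 ≤ d * (j - 1) := Nat.le_mul_of_pos_left _ (by omega)
      have h3 : d * (j - 1) + d = d * j := by
        have hj1 : j - 1 + 1 = j := by omega
        calc d * (j - 1) + d = d * ((j - 1) + 1) := by ring
          _ = d * j := by rw [hj1]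
      omega
    calc 2 ^ (d + ν) ∣ 2 ^ (ν - t) * 2 ^ (d * j) := by
          rw [← pow_add]; exact pow_dvd_pow 2 (by omega)
      _ ∣ k.choose j * 2 ^ (d * j) := mul_dvd_mul_right hC _


/-- For `d ≥ 2` and `k ≥ 1`, in `ℤ[u, v]` one has
`(u + 2^d·v)^k = u^k + 2^(d+ν₂(k))·g` where
`g = (odd)·u^(k-1)·v + terms of higher degree in v`. -/
theorem binomial_two_divisibility (d k : ℕ) (hd : 2 ≤ d) (hk : 1 ≤ k) :
    ∃ g : MvPolynomial (Fin 2) ℤ,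
      ((X 0 : MvPolynomial (Fin 2) ℤ) + 2 ^ d * X 1) ^ k
        = (X 0 : MvPolynomial (Fin 2) ℤ) ^ k + 2 ^ (d + padicValNat 2 k) * g ∧
      Odd (g.coeff (Finsupp.single (0 : Fin 2) (k - 1)
        + Finsupp.single (1 : Fin 2) 1)) ∧
      ∀ m : Fin 2 →₀ ℕ, g.coeff m ≠ 0 →
        m = Finsupp.single (0 : Fin 2) (k - 1) + Finsupp.single (1 : Fin 2) 1
          ∨ 2 ≤ m 1 := by
  set ν := padicValNat 2 k with hν
  set c : ℕ → ℕ := fun j => k.choose j * 2 ^ (d * j) / 2 ^ (d + ν) with hc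
  have hcmul : ∀ j, 1 ≤ j → (c j) * 2 ^ (d + ν) = k.choose j * 2 ^ (d * j) :=
    fun j hj => Nat.div_mul_cancel (key_dvd d k hd j hj)
  set M : ℕ → (Fin 2 →₀ ℕ) := fun j =>
    Finsupp.single (0 : Fin 2) (k - j) + Finsupp.single (1 : Fin 2) j with hM
  set g : MvPolynomial (Fin 2) ℤ :=
    ∑ i ∈ Finset.range k, monomial (M (i + 1)) ((c (i + 1) : ℤ)) with hg
  have hMapply1 : ∀ j, (M j) 1 = j := by
    intro j
    simp [hM, Finsupp.single_apply]
  have hMinj : ∀ i j, M i = M j → i = j := by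
    intro i j h
    have := congrArg (fun f => f 1) h
    simpa [hMapply1] using this
  refine ⟨g, ?_, ?_, ?_⟩
  · -- the identity
    have hmono : ∀ (p q : ℕ) (a : ℤ), C a * X (0 : Fin 2) ^ p * X 1 ^ q
        = monomial (Finsupp.single (0 : Fin 2) p + Finsupp.single (1 : Fin 2) q) a := by
      intro p q a
      rw [X_pow_eq_monomial, X_pow_eq_monomial, C_mul_monomial, monomial_mul]; ring_nf
    rw [add_comm ((X 0 : MvPolynomial (Fin 2) ℤ)) _, add_pow, Finset.sum_range_succ']
    have hterm : ∀ i ∈ Finset.range k,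
        (2 ^ d * X 1 : MvPolynomial (Fin 2) ℤ) ^ (i + 1) * X 0 ^ (k - (i + 1))
          * (k.choose (i + 1) : MvPolynomial (Fin 2) ℤ)
        = 2 ^ (d + ν) * monomial (M (i + 1)) ((c (i + 1) : ℤ)) := by
      intro i _
      rw [show M (i + 1)
          = Finsupp.single (0 : Fin 2) (k - (i + 1)) + Finsupp.single (1 : Fin 2) (i + 1)
          from rfl, ← hmono (k - (i + 1)) (i + 1) ((c (i + 1) : ℤ))]
      have hscal : ((c (i + 1) : ℤ)) * 2 ^ (d + ν)
          = (k.choose (i + 1) : ℤ) * 2 ^ (d * (i + 1)) := by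
        exact_mod_cast hcmul (i + 1) (by omega)
      have hs2 : (C ((c (i + 1) : ℤ)) : MvPolynomial (Fin 2) ℤ) * 2 ^ (d + ν)
          = C ((k.choose (i + 1) : ℤ)) * 2 ^ (d * (i + 1)) := by
        have h' := congrArg (MvPolynomial.C (σ := Fin 2)) hscal
        simpa only [map_mul, map_pow, map_ofNat] using h'
      rw [show ((k.choose (i + 1) : ℕ) : MvPolynomial (Fin 2) ℤ)
          = C ((k.choose (i + 1) : ℤ)) by simp]
      have hpow : (2 ^ d * X 1 : MvPolynomial (Fin 2) ℤ) ^ (i + 1)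
          = 2 ^ (d * (i + 1)) * X 1 ^ (i + 1) := by
        rw [mul_pow, ← pow_mul]
      rw [hpow]
      linear_combination (-(X 0 ^ (k - (i + 1)) * X 1 ^ (i + 1))) * hs2
    rw [Finset.sum_congr rfl hterm, ← Finset.mul_sum, ← hg]
    simp [add_comm]
  · -- odd leading coefficient
    have hcoeff : g.coeff (Finsupp.single (0 : Fin 2) (k - 1)
        + Finsupp.single (1 : Fin 2) 1) = (c 1 : ℤ) := by
      rw [hg, MvPolynomial.coeff_sum]
      rw [Finset.sum_eq_single 0]
      · rw [coeff_monomial, if_pos rfl]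
      · intro b _ hb0
        rw [coeff_monomial, if_neg]
        intro hEq
        have h1 := congrArg (fun f : Fin 2 →₀ ℕ => f 1) hEq
        simp only [hMapply1] at h1
        simp [Finsupp.single_apply] at h1
        omega
      · intro h0
        exact absurd (Finset.mem_range.mpr (by omega)) h0
    rw [hcoeff]
    rw [Int.odd_coe_nat]
    have hc1 : c 1 = k / 2 ^ ν := by
      rw [hc]
      simp only [Nat.choose_one_right, mul_one]
      rw [pow_add, mul_comm ((2 : ℕ) ^ d) ((2 : ℕ) ^ ν)]
      exact Nat.mul_div_mul_right k (2 ^ ν) (by positivity)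
    rw [hc1]
    have hord : k / 2 ^ ν = ordCompl[2] k := by
      rw [hν, ← Nat.factorization_def k Nat.prime_two]
    have hodd : ¬ 2 ∣ k / 2 ^ ν := by
      rw [hord]; exact Nat.not_dvd_ordCompl Nat.prime_two (by omega)
    exact Nat.odd_iff.mpr ((Nat.mod_two_eq_zero_or_one _).resolve_left
      (fun h => hodd (Nat.dvd_of_mod_eq_zero h)))
  · -- support
    intro m hm
    rw [hg, MvPolynomial.coeff_sum] at hm
    obtain ⟨i, hi, hne⟩ := Finset.exists_ne_zero_of_sum_ne_zero hm
    have heq : M (i + 1) = m := by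
      by_contra h
      rw [coeff_monomial, if_neg h] at hne
      exact hne rfl
    rcases Nat.eq_zero_or_pos i with rfl | hipos
    · left; exact heq.symm
    · right
      rw [← heq, hMapply1]
      omega
end
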